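/- arXiv:2205.04309 — 3 statements merged into one kernel-verified Lean document; each statement's English description precedes it below -/
import Mathlib

section
/- Let W ⊆ C^ω be a prefix-increasing objective, let L̄ be a completely well-monotonic C-graph, and let L be the restriction of L̄ to the set of its vertices which satisfy W (this restriction is a well-monotonic C-graph, since by prefix-increasingness no edge of L̄ leaves this downward-closed set). Let κ be a cardinal. Then the following are equivalent: (i) L̄ is (κ,W)-universal; (ii) the completion L^⊤ is (κ,W)-universal; (iii) every C-graph with fewer than κ vertices satisfying W admits a morphism into L. -/
/-!
Common vocabulary: graphs as edge relations `E : V → C → V → Prop` (a `C`-graph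
additionally has no sinks), infinite paths and their colorations, valuations,
values of vertices, morphisms, universality, monotonic graphs, games,
strategies, positional strategies and positionality, neutral colors.
-/

universe u v w

section Prelim

variable {C : Type} {X : Type}

/-- A `C`-graph (as an edge relation) has no sinks. -/
def NoSinks {V : Type v} (E : V → C → V → Prop) : Prop :=
  ∀ a : V, ∃ (c : C) (b : V), E a c b

/-- `InfPath E a w` : there is an infinite path from `a` with coloration `w`. -/
def InfPath {V : Type v} (E : V → C → V → Prop) (a : V) (w : ℕ → C) : Prop :=
  ∃ ρ : ℕ → V, ρ 0 = a ∧ ∀ i, E (ρ i) (w i) (ρ (i + 1))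

/-- The value of a vertex in a graph: supremum of values of colorations of
infinite paths from it. -/
noncomputable def vval {V : Type v} [CompleteLinearOrder X]
    (val : (ℕ → C) → X) (E : V → C → V → Prop) (a : V) : X :=
  sSup (val '' {w | InfPath E a w})

/-- Morphisms of `C`-graphs. -/
def IsMorphism {V : Type v} {V' : Type w} (E : V → C → V → Prop)
    (E' : V' → C → V' → Prop) (φ : V → V') : Prop :=
  ∀ ⦃a : V⦄ ⦃c : C⦄ ⦃b : V⦄, E a c b → E' (φ a) c (φ b)

/-- `val`-preserving morphisms of `C`-graphs. -/
def ValPreserving {V : Type v} {V' : Type w} [CompleteLinearOrder X]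
    (val : (ℕ → C) → X) (E : V → C → V → Prop) (E' : V' → C → V' → Prop)
    (φ : V → V') : Prop :=
  IsMorphism E E' φ ∧ ∀ a : V, vval val E' (φ a) = vval val E a

/-- Left composition: `a ≥ b → (b →c d) → (a →c d)`. -/
def LeftComp {L : Type v} [LinearOrder L] (M : L → C → L → Prop) : Prop :=
  ∀ ⦃a b : L⦄ ⦃c : C⦄ ⦃d : L⦄, b ≤ a → M b c d → M a c d

/-- Right composition: `(a →c b) → b ≥ d → (a →c d)`. -/
def RightComp {L : Type v} [LinearOrder L] (M : L → C → L → Prop) : Prop :=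
  ∀ ⦃a : L⦄ ⦃c : C⦄ ⦃b d : L⦄, M a c b → d ≤ b → M a c d

/-- A monotonic graph over a linearly ordered vertex set. -/
def Monotonic {L : Type v} [LinearOrder L] (M : L → C → L → Prop) : Prop :=
  LeftComp M ∧ RightComp M

/-- Every vertex has a `c`-predecessor, for every color `c`. -/
def CompletePreds {L : Type v} (M : L → C → L → Prop) : Prop :=
  ∀ (c : C) (l : L), ∃ p : L, M p c l

/-- `CWM C L M` : `M` is a completely well-monotonic `C`-graph over `L`:
monotonic, without sinks, well-ordered, a complete lattice, and with all
`c`-predecessors. -/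
def CWM (C : Type) (L : Type v) [LinearOrder L] (M : L → C → L → Prop) : Prop :=
  Monotonic M ∧ NoSinks M ∧ WellFounded ((· < ·) : L → L → Prop) ∧
    (∀ A : Set L, ∃ a : L, IsLUB A a) ∧ CompletePreds M

/-- `(κ, val)`-universality: every `C`-graph with fewer than `κ` vertices has a
`val`-preserving morphism into `M`. -/
def Universal {L : Type v} [CompleteLinearOrder X] (val : (ℕ → C) → X)
    (κ : Cardinal.{u}) (M : L → C → L → Prop) : Prop :=
  ∀ (V : Type u) (E : V → C → V → Prop), NoSinks E → Cardinal.mk V < κ →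
    ∃ φ : V → L, ValPreserving val E M φ

/-! Histories: finite paths from `v₀`, stored as lists of steps `(c, x)`,
most recent step first. -/

/-- Last vertex of a history. -/
def lastV {V : Type v} (v₀ : V) : List (C × V) → V
  | [] => v₀
  | (_, x) :: _ => x

/-- Validity of a history with respect to the graph `E` and start vertex `v₀`. -/
def ValidPath {V : Type v} (E : V → C → V → Prop) (v₀ : V) : List (C × V) → Prop
  | [] => True
  | (c, x) :: rest => ValidPath E v₀ rest ∧ E (lastV v₀ rest) c x

/-- A strategy (for Eve) from `v₀` in the game `(E, VEve, val)` : a subgraph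
`(H, F)` of the unfolding of `E` from `v₀`, containing the empty history,
without sinks, and closed under all extensions at Adam vertices. -/
structure Strategy {V : Type v} (E : V → C → V → Prop) (VEve : Set V) (v₀ : V) where
  H : Set (List (C × V))
  F : List (C × V) → C → List (C × V) → Prop
  valid : ∀ π ∈ H, ValidPath E v₀ π
  nil_mem : [] ∈ H
  F_sub : ∀ ⦃π : List (C × V)⦄ ⦃c : C⦄ ⦃π' : List (C × V)⦄,
    F π c π' → π ∈ H ∧ π' ∈ H ∧ ∃ x : V, π' = (c, x) :: π
  no_sink : ∀ π ∈ H, ∃ (c : C) (π' : List (C × V)), F π c π'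
  adam_closed : ∀ π ∈ H, lastV v₀ π ∉ VEve →
    ∀ (c : C) (x : V), E (lastV v₀ π) c x → ((c, x) :: π) ∈ H ∧ F π c ((c, x) :: π)

/-- The value of a strategy: supremum of values of colorations of infinite
paths from the empty history in the strategy. -/
noncomputable def Strategy.value {V : Type v} [CompleteLinearOrder X]
    (val : (ℕ → C) → X) {E : V → C → V → Prop} {VEve : Set V} {v₀ : V}
    (S : Strategy E VEve v₀) : X :=
  sSup (val '' {w | ∃ ρ : ℕ → List (C × V), ρ 0 = [] ∧ ∀ i, S.F (ρ i) (w i) (ρ (i + 1))})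

/-- The value of a vertex in a game: infimum of values of strategies from it. -/
noncomputable def gameValue {V : Type v} [CompleteLinearOrder X] (val : (ℕ → C) → X)
    (E : V → C → V → Prop) (VEve : Set V) (v₀ : V) : X :=
  ⨅ S : Strategy E VEve v₀, S.value val

/-- A positional strategy: a subgraph of `E` over all vertices keeping all
outgoing edges of Adam vertices. -/
structure PosStrategy {V : Type v} (E : V → C → V → Prop) (VEve : Set V) where
  F : V → C → V → Prop
  sub : ∀ ⦃a : V⦄ ⦃c : C⦄ ⦃b : V⦄, F a c b → E a c b
  no_sink : NoSinks F
  adam_all : ∀ a : V, a ∉ VEve → ∀ (c : C) (b : V), E a c b → F a c b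

/-- The value of a positional strategy from a vertex. -/
noncomputable def PosStrategy.value {V : Type v} [CompleteLinearOrder X]
    (val : (ℕ → C) → X) {E : V → C → V → Prop} {VEve : Set V}
    (P : PosStrategy E VEve) (v₀ : V) : X :=
  vval val P.F v₀

/-- Optimality of a positional strategy. -/
def PosStrategy.Optimal {V : Type v} [CompleteLinearOrder X]
    (val : (ℕ → C) → X) {E : V → C → V → Prop} {VEve : Set V}
    (P : PosStrategy E VEve) : Prop :=
  ∀ v₀ : V, P.value val v₀ = gameValue val E VEve v₀

/-- A valuation is positional if every game with this valuation admits an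
optimal positional strategy. -/
def Positional [CompleteLinearOrder X] (val : (ℕ → C) → X) : Prop :=
  ∀ (V : Type u) (E : V → C → V → Prop), NoSinks E → ∀ VEve : Set V,
    ∃ P : PosStrategy E VEve, P.Optimal val

/-! Words and neutral colors. -/

/-- Concatenation of a finite word with an infinite word. -/
def wcat (u : List C) (w : ℕ → C) : ℕ → C := fun i =>
  if h : i < u.length then u.get ⟨i, h⟩ else w (i - u.length)

/-- `w'` is obtained from `w` by inserting finitely many `e`'s between
consecutive letters (and before the first letter):
`w' = e^{n₀} w₀ e^{n₁} w₁ ⋯`. -/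
def IsEpsInsertion (e : C) (w w' : ℕ → C) : Prop :=
  ∃ σ : ℕ → ℕ, StrictMono σ ∧ (∀ k, w' (σ k) = w k) ∧ ∀ i, i ∉ Set.range σ → w' i = e

/-- `e` is a neutral color for `val`. -/
def Neutral [CompleteLinearOrder X] (val : (ℕ → C) → X) (e : C) : Prop :=
  ∀ w w' : ℕ → C, IsEpsInsertion e w w' → val w' = val w

/-- `e` is eventually good for Eve. -/
def EvGoodForEve [CompleteLinearOrder X] (val : (ℕ → C) → X) (e : C) : Prop :=
  ∀ u : List C, val (wcat u fun _ => e) = ⨅ z : ℕ → C, val (wcat u z)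

/-- `e` is strongly neutral for `val`. -/
def StronglyNeutral [CompleteLinearOrder X] (val : (ℕ → C) → X) (e : C) : Prop :=
  Neutral val e ∧ EvGoodForEve val e

/-- Prefix-increasing valuations. -/
def PrefixIncreasing [CompleteLinearOrder X] (val : (ℕ → C) → X) : Prop :=
  ∀ (u : List C) (w : ℕ → C), val w ≤ val (wcat u w)

/-! Objectives. -/

/-- The valuation (into the two-element complete linear order `Prop`,
`⊥ = False`, `⊤ = True`) associated with an objective `W`: winning words have
value `⊥`. -/
def toVal (W : Set (ℕ → C)) : (ℕ → C) → Prop := fun w => w ∉ W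

/-- A vertex satisfies the objective `W` if every coloration of an infinite
path from it belongs to `W`. -/
def Sat {V : Type v} (W : Set (ℕ → C)) (E : V → C → V → Prop) (a : V) : Prop :=
  ∀ w : ℕ → C, InfPath E a w → w ∈ W

/-- Prefix-invariant objectives. -/
def PrefixInvariant (W : Set (ℕ → C)) : Prop :=
  ∀ (u : List C) (w : ℕ → C), wcat u w ∈ W ↔ w ∈ W

/-- The completion `L^⊤` of a monotonic graph: a new top vertex with all
outgoing edges is added. -/
def completionE {L : Type v} (M : L → C → L → Prop) :
    WithTop L → C → WithTop L → Prop := fun x c y =>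
  x = ⊤ ∨ ∃ a b : L, x = (a : WithTop L) ∧ y = (b : WithTop L) ∧ M a c b

/-- A graph has sufficiently many `e`-edges if `→e` is "well-founded" in the
sense that every nonempty set of vertices contains a vertex `a` with `b →e a`
for all `b` in the set. -/
def SuffEps {V : Type v} (E : V → C → V → Prop) (e : C) : Prop :=
  ∀ A : Set V, A.Nonempty → ∃ a ∈ A, ∀ b ∈ A, E b e a

end Prelim
section Aux

variable {C : Type} {W : Set (ℕ → C)}

lemma vval_iff {V : Type v} (E : V → C → V → Prop) (a : V) :
    vval (toVal W) E a ↔ ∃ w, InfPath E a w ∧ w ∉ W := by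
  unfold vval
  rw [sSup_Prop_eq]
  constructor
  · rintro ⟨p, ⟨w, hw, rfl⟩, hp⟩; exact ⟨w, hw, hp⟩
  · rintro ⟨w, hw, hnw⟩; exact ⟨toVal W w, ⟨w, hw, rfl⟩, hnw⟩

lemma morphism_infPath {V : Type v} {V' : Type w} {E : V → C → V → Prop}
    {E' : V' → C → V' → Prop} {φ : V → V'} (hφ : IsMorphism E E' φ)
    {a : V} {z : ℕ → C} (h : InfPath E a z) : InfPath E' (φ a) z := by
  obtain ⟨ρ, h0, hs⟩ := h
  exact ⟨fun i => φ (ρ i), by simp only []; rw [h0], fun i => hφ (hs i)⟩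

lemma not_vval_iff_sat {V : Type v} (E : V → C → V → Prop) (a : V) :
    ¬ vval (toVal W) E a ↔ Sat W E a := by
  rw [vval_iff]
  push_neg
  exact Iff.rfl

lemma sat_closed (hpi : ∀ (u : List C) (w : ℕ → C), wcat u w ∈ W → w ∈ W)
    {V : Type v} {E : V → C → V → Prop} {a : V} {c : C} {b : V}
    (ha : Sat W E a) (hab : E a c b) : Sat W E b := by
  intro w hw
  obtain ⟨ρ, h0, hs⟩ := hw
  have hmem : wcat [c] w ∈ W := by
    apply ha
    refine ⟨fun i => match i with | 0 => a | j + 1 => ρ j, rfl, ?_⟩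
    intro i
    cases i with
    | zero =>
      show E a (wcat [c] w 0) (ρ 0)
      rw [h0]
      simpa [wcat] using hab
    | succ j =>
      show E (ρ j) (wcat [c] w (j + 1)) (ρ (j + 1))
      simpa [wcat] using hs j

  exact hpi [c] w hmem

end Aux

/-- Lemma 6.2, universality for prefix-increasing
objectives.  Let `W` be a prefix-increasing objective, `L̄` a completely
well-monotonic graph, and `L` the restriction of `L̄` to the vertices
satisfying `W`.  Then the following are equivalent: (i) `L̄` is
`(κ, W)`-universal; (ii) the completion `L^⊤` is `(κ, W)`-universal;
(iii) every graph with fewer than `κ` vertices satisfying `W` admits a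
morphism into `L`. -/
theorem stmt10 {C : Type} {L : Type v} [LinearOrder L] (W : Set (ℕ → C))
    (hpi : ∀ (u : List C) (w : ℕ → C), wcat u w ∈ W → w ∈ W)
    (M : L → C → L → Prop) (hcwm : CWM C L M) (κ : Cardinal.{u}) :
    (Universal (toVal W) κ M ↔
      Universal (toVal W) κ
        (completionE
          (fun (p : {l : L // Sat W M l}) (c : C) (q : {l : L // Sat W M l}) =>
            M p.val c q.val))) ∧
    (Universal (toVal W) κ M ↔
      ∀ (V : Type u) (E : V → C → V → Prop), NoSinks E → Cardinal.mk V < κ →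
        (∀ v : V, Sat W E v) →
        ∃ φ : V → {l : L // Sat W M l},
          IsMorphism E
            (fun (p : {l : L // Sat W M l}) (c : C) (q : {l : L // Sat W M l}) =>
              M p.val c q.val) φ) := by
  classical
  obtain ⟨⟨hleft, hright⟩, hns, hwf, hsupA, hpred⟩ := hcwm
  obtain ⟨t, ht⟩ := hsupA Set.univ
  have htop : ∀ l : L, l ≤ t := fun l => ht.1 (Set.mem_univ l)
  have hMt : ∀ (c : C) (l : L), M t c l := by
    intro c l
    obtain ⟨p, hp⟩ := hpred c l
    exact hleft (htop p) hp
  have hpath_t : ∀ z : ℕ → C, InfPath M t z := fun z =>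
    ⟨fun _ => t, rfl, fun _ => hMt _ _⟩
  have hvt : vval (toVal W) M t ↔ ∃ w, w ∉ W := by
    rw [vval_iff]
    exact ⟨fun ⟨w, _, hw⟩ => ⟨w, hw⟩, fun ⟨w, hw⟩ => ⟨w, hpath_t w, hw⟩⟩
  set LS := {l : L // Sat W M l} with hLS
  set MS : LS → C → LS → Prop := fun p c q => M p.val c q.val with hMS
  set π : WithTop LS → L := fun x => WithTop.recTopCoe t Subtype.val x with hπdef
  have hπ : IsMorphism (completionE MS) M π := by
    rintro a c b (rfl | ⟨p, q, rfl, rfl, hpq⟩)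
    · exact hMt c _
    · exact hpq
  have hsat_some : ∀ l : LS, ∀ z, InfPath (completionE MS) (l : WithTop LS) z → z ∈ W := by
    intro l z hz
    exact l.prop z (morphism_infPath hπ hz)
  have hvtc : vval (toVal W) (completionE MS) (⊤ : WithTop LS) ↔ ∃ w, w ∉ W := by
    rw [vval_iff]
    constructor
    · rintro ⟨w, _, hw⟩; exact ⟨w, hw⟩
    · rintro ⟨w, hw⟩
      exact ⟨w, ⟨fun _ => ⊤, rfl, fun _ => Or.inl rfl⟩, hw⟩
  -- (i) → (ii)
  have p12 : Universal (toVal W) κ M → Universal (toVal W) κ (completionE MS) := by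
    intro h1 V E hnsE hκ
    obtain ⟨φ, hφm, hφv⟩ := h1 V E hnsE hκ
    refine ⟨fun v => if h : Sat W M (φ v) then ((⟨φ v, h⟩ : LS) : WithTop LS) else ⊤, ?_, ?_⟩
    · intro a c b hab
      by_cases ha : Sat W M (φ a)
      · have hb : Sat W M (φ b) := sat_closed hpi ha (hφm hab)
        simp only [dif_pos ha, dif_pos hb]
        exact Or.inr ⟨⟨φ a, ha⟩, ⟨φ b, hb⟩, rfl, rfl, hφm hab⟩
      · simp only [dif_neg ha]
        exact Or.inl rfl
    · intro v
      rw [← hφv v]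
      by_cases hv : Sat W M (φ v)
      · simp only [dif_pos hv]
        apply eq_iff_iff.mpr
        constructor
        · intro h
          obtain ⟨w, hw, hnw⟩ := (vval_iff _ _).mp h
          exact absurd (hsat_some ⟨φ v, hv⟩ w hw) hnw
        · intro h
          exact absurd h ((not_vval_iff_sat _ _).mpr hv)
      · simp only [dif_neg hv]
        apply eq_iff_iff.mpr
        have hvv : vval (toVal W) M (φ v) := by
          by_contra h
          exact hv ((not_vval_iff_sat _ _).mp h)
        obtain ⟨w, _, hnw⟩ := (vval_iff _ _).mp hvv
        exact ⟨fun _ => hvv, fun _ => hvtc.mpr ⟨w, hnw⟩⟩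
  -- (ii) → (i)
  have p21 : Universal (toVal W) κ (completionE MS) → Universal (toVal W) κ M := by
    intro h2 V E hnsE hκ
    obtain ⟨φ, hφm, hφv⟩ := h2 V E hnsE hκ
    refine ⟨fun v => π (φ v), fun a c b hab => hπ (hφm hab), ?_⟩
    intro v
    rw [← hφv v]
    apply eq_iff_iff.mpr
    show vval (toVal W) M (π (φ v)) ↔ vval (toVal W) (completionE MS) (φ v)
    cases hx : φ v with
    | top =>
      have h1 : vval (toVal W) M (π ⊤) ↔ ∃ w, w ∉ W := hvt
      have h2' : vval (toVal W) (completionE MS) ⊤ ↔ ∃ w, w ∉ W := hvtc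
      exact h1.trans h2'.symm
    | coe l =>
      constructor
      · intro h
        exact absurd h ((not_vval_iff_sat _ _).mpr l.prop)
      · intro h
        obtain ⟨w, hw, hnw⟩ := (vval_iff _ _).mp h
        exact absurd (hsat_some l w hw) hnw
  -- (i) → (iii)
  have p13 : Universal (toVal W) κ M →
      ∀ (V : Type u) (E : V → C → V → Prop), NoSinks E → Cardinal.mk V < κ →
        (∀ v : V, Sat W E v) → ∃ φ : V → LS, IsMorphism E MS φ := by
    intro h1 V E hnsE hκ hsatE
    obtain ⟨φ, hφm, hφv⟩ := h1 V E hnsE hκ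
    have hsatφ : ∀ v, Sat W M (φ v) := by
      intro v
      have h0 : ¬ vval (toVal W) E v := (not_vval_iff_sat _ _).mpr (hsatE v)
      rw [← hφv v] at h0
      exact (not_vval_iff_sat _ _).mp h0
    exact ⟨fun v => ⟨φ v, hsatφ v⟩, fun a c b h => hφm h⟩
  -- (iii) → (i)
  have p31 : (∀ (V : Type u) (E : V → C → V → Prop), NoSinks E → Cardinal.mk V < κ →
      (∀ v : V, Sat W E v) → ∃ φ : V → LS, IsMorphism E MS φ) →
      Universal (toVal W) κ M := by
    intro h3 V E hnsE hκ
    have hclosed : ∀ {a c b}, Sat W E a → E a c b → Sat W E b :=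
      fun ha h => sat_closed hpi ha h
    set E₀ : {v : V // Sat W E v} → C → {v : V // Sat W E v} → Prop :=
      fun a c b => E a.val c b.val with hE₀
    have hns₀ : NoSinks E₀ := by
      rintro ⟨a, ha⟩
      obtain ⟨c, b, hb⟩ := hnsE a
      exact ⟨c, ⟨b, hclosed ha hb⟩, hb⟩
    have hκ₀ : Cardinal.mk {v : V // Sat W E v} < κ :=
      lt_of_le_of_lt (Cardinal.mk_subtype_le _) hκ
    have hι : IsMorphism E₀ E Subtype.val := fun a c b h => h
    have hsat₀ : ∀ v : {v : V // Sat W E v}, Sat W E₀ v := by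
      intro v z hz
      exact v.prop z (morphism_infPath hι hz)
    obtain ⟨ψ, hψ⟩ := h3 {v : V // Sat W E v} E₀ hns₀ hκ₀ hsat₀
    refine ⟨fun v => if h : Sat W E v then (ψ ⟨v, h⟩).val else t, ?_, ?_⟩
    · intro a c b hab
      by_cases ha : Sat W E a
      · have hb := hclosed ha hab
        simp only [dif_pos ha, dif_pos hb]
        exact hψ (show E₀ ⟨a, ha⟩ c ⟨b, hb⟩ from hab)
      · simp only [dif_neg ha]
        exact hMt c _
    · intro v
      by_cases hv : Sat W E v
      · simp only [dif_pos hv]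
        apply eq_iff_iff.mpr
        constructor
        · intro h
          exact absurd h ((not_vval_iff_sat _ _).mpr (ψ ⟨v, hv⟩).prop)
        · intro h
          exact absurd h ((not_vval_iff_sat _ _).mpr hv)
      · simp only [dif_neg hv]
        apply eq_iff_iff.mpr
        have hvv : vval (toVal W) E v := by
          by_contra h
          exact hv ((not_vval_iff_sat _ _).mp h)
        obtain ⟨w, _, hnw⟩ := (vval_iff _ _).mp hvv
        exact ⟨fun _ => hvv, fun _ => hvt.mpr ⟨w, hnw⟩⟩
  exact ⟨⟨p12, p21⟩, ⟨p13, p31⟩⟩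
end

section
/- Let C = {safe, bad} and let Co-Büchi = { w ∈ C^ω : w contains only finitely many occurrences of bad }. For an ordinal α, let L_α be the C-graph with vertex set [0,α) (ordinals below α, with the ordinal order) and edges λ →bad λ' if and only if λ > λ', and λ →safe λ' if and only if λ ≥ λ'. Then L_α is well-monotonic, L_α satisfies Co-Büchi, and every C-graph with fewer than |α| vertices satisfying Co-Büchi admits a morphism into L_α. -/
/-!
Common vocabulary: graphs as edge relations `E : V → C → V → Prop` (a `C`-graph
additionally has no sinks), infinite paths and their colorations, valuations,
values of vertices, morphisms, universality, monotonic graphs, games,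
strategies, positional strategies and positionality, neutral colors.
-/

universe u v w

/-- The two colors for co-Büchi games. -/
inductive SC : Type
  | safe : SC
  | bad : SC

/-- The co-Büchi objective: finitely many occurrences of `bad`. -/
def CoBuchi : Set (ℕ → SC) := {w | {i : ℕ | w i = SC.bad}.Finite}

/-- The well-monotonic graph `L_α` over `[0, α)` for co-Büchi:
`λ →bad λ'` iff `λ > λ'`, and `λ →safe λ'` iff `λ ≥ λ'`. -/
def cobuchiE (α : Ordinal.{0}) :
    ↥(Set.Iio α) → SC → ↥(Set.Iio α) → Prop :=
  fun l c l' =>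
    match c with
    | SC.bad => l'.val < l.val
    | SC.safe => l'.val ≤ l.val

section CoBuchiAux

variable {V : Type} (E : V → SC → V → Prop)

/-- One step in a graph, forgetting colors. -/
private def cbStep : V → V → Prop := fun a b => ∃ c, E a c b

/-- `cbBelow E v' v` : there is a path from `v` to `v'` ending with a bad edge. -/
private def cbBelow : V → V → Prop := fun v' v =>
  ∃ u, Relation.ReflTransGen (cbStep E) v u ∧ E u SC.bad v'

private lemma cbExPath {a b : V} (h : Relation.ReflTransGen (cbStep E) a b) :
    ∃ (k : ℕ) (p : ℕ → V) (q : ℕ → SC),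
      p 0 = a ∧ p k = b ∧ ∀ i < k, E (p i) (q i) (p (i + 1)) := by
  induction h with
  | refl =>
    exact ⟨0, fun _ => a, fun _ => SC.safe, rfl, rfl, fun i hi => absurd hi (Nat.not_lt_zero i)⟩
  | @tail b c hab hbc ih =>
    obtain ⟨k, p, q, h0, hk, he⟩ := ih
    obtain ⟨col, hcol⟩ := hbc
    refine ⟨k + 1, fun i => if i = k + 1 then c else p i,
      fun i => if i = k then col else q i, ?_, ?_, ?_⟩
    · beta_reduce; rw [if_neg (by omega)]; exact h0
    · simp
    · intro i hi
      rcases Nat.lt_succ_iff_lt_or_eq.1 hi with hik | rfl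
      · beta_reduce
        rw [if_neg (by omega : ¬ i = k + 1), if_neg (by omega : ¬ i = k),
          if_neg (by omega : ¬ i + 1 = k + 1)]
        exact he i hik
      · beta_reduce
        rw [if_neg (by omega : ¬ i = i + 1), if_pos rfl, if_pos rfl, hk]
        exact hcol

private lemma cbSegment {v v' : V} (h : cbBelow E v' v) :
    ∃ (k : ℕ) (p : ℕ → V) (q : ℕ → SC), 0 < k ∧ p 0 = v ∧ p k = v' ∧
      (∀ i < k, E (p i) (q i) (p (i + 1))) ∧ q (k - 1) = SC.bad := by
  obtain ⟨u, hr, hbad⟩ := h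
  obtain ⟨k, p, q, h0, hk, he⟩ := cbExPath E hr
  refine ⟨k + 1, fun i => if i = k + 1 then v' else p i,
    fun i => if i = k then SC.bad else q i, Nat.succ_pos k, ?_, ?_, ?_, ?_⟩
  · beta_reduce; rw [if_neg (by omega)]; exact h0
  · simp
  · intro i hi
    rcases Nat.lt_succ_iff_lt_or_eq.1 hi with hik | rfl
    · beta_reduce
      rw [if_neg (by omega : ¬ i = k + 1), if_neg (by omega : ¬ i = k),
        if_neg (by omega : ¬ i + 1 = k + 1)]
      exact he i hik
    · beta_reduce
      rw [if_neg (by omega : ¬ i = i + 1), if_pos rfl, if_pos rfl, hk]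
      exact hbad
  · simp

private lemma cbWF (hsat : ∀ v : V, Sat CoBuchi E v) : WellFounded (cbBelow E) := by
  by_contra hwf
  have hex : ∃ a : V, ¬Acc (cbBelow E) a := by
    by_contra h
    push_neg at h
    exact hwf ⟨h⟩
  have hstep : ∀ a : {a : V // ¬Acc (cbBelow E) a},
      ∃ b : {a : V // ¬Acc (cbBelow E) a}, cbBelow E b.1 a.1 := by
    rintro ⟨a, ha⟩
    obtain ⟨b, hb, hba⟩ := exists_not_acc_lt_of_not_acc ha
    exact ⟨⟨b, hb⟩, hba⟩
  choose next hnext using hstep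
  obtain ⟨a0, ha0⟩ := hex
  let F : ℕ → {a : V // ¬Acc (cbBelow E) a} := fun n => next^[n] ⟨a0, ha0⟩
  let f : ℕ → V := fun n => (F n).1
  have hdesc : ∀ n, cbBelow E (f (n + 1)) (f n) := by
    intro n
    have hFn : F (n + 1) = next (F n) := Function.iterate_succ_apply' next n _
    show (F (n + 1)).1 ∈ {x | cbBelow E x (F n).1}
    rw [hFn]
    exact hnext (F n)
  have hseg := fun n => cbSegment E (hdesc n)
  choose k p q hkpos h0 hlast hedge hbad using hseg
  let loc : ℕ → ℕ × ℕ := fun i => Nat.rec (0, 0)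
    (fun _ st => if st.2 + 1 = k st.1 then (st.1 + 1, 0) else (st.1, st.2 + 1)) i
  have hloc_succ : ∀ i, loc (i + 1) =
      if (loc i).2 + 1 = k (loc i).1 then ((loc i).1 + 1, 0)
      else ((loc i).1, (loc i).2 + 1) := fun i => rfl
  have hinv : ∀ i, (loc i).2 < k (loc i).1 := by
    intro i
    induction i with
    | zero => exact hkpos 0
    | succ i ih =>
      rw [hloc_succ i]
      split
      · exact hkpos _
      · next h => exact lt_of_le_of_ne (Nat.succ_le_of_lt ih) h
  let ρ : ℕ → V := fun i => p (loc i).1 (loc i).2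
  let w : ℕ → SC := fun i => q (loc i).1 (loc i).2
  have hρ0 : ρ 0 = f 0 := h0 0
  have hρstep : ∀ i, E (ρ i) (w i) (ρ (i + 1)) := by
    intro i
    have hj := hinv i
    have he := hedge (loc i).1 (loc i).2 hj
    show E (p (loc i).1 (loc i).2) (q (loc i).1 (loc i).2) (p (loc (i + 1)).1 (loc (i + 1)).2)
    rw [hloc_succ i]
    split
    · next hb =>
      have hpp : p ((loc i).1 + 1) 0 = p (loc i).1 ((loc i).2 + 1) := by
        rw [h0 ((loc i).1 + 1), ← hlast (loc i).1, hb]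
      dsimp only
      rw [hpp]
      exact he
    · exact he
  have hB : ∀ n i, loc i = (n, 0) → ∀ t, t < k n → loc (i + t) = (n, t) := by
    intro n i hi t
    induction t with
    | zero => intro _; exact hi
    | succ t ih =>
      intro ht
      have h1 := ih (Nat.lt_of_succ_lt ht)
      have h2 : i + (t + 1) = (i + t) + 1 := rfl
      rw [h2, hloc_succ, h1]
      dsimp only
      rw [if_neg (by omega)]
  have hA : ∀ n, ∃ i, loc i = (n, 0) := by
    intro n
    induction n with
    | zero => exact ⟨0, rfl⟩
    | succ n ih =>
      obtain ⟨i, hi⟩ := ih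
      refine ⟨i + k n, ?_⟩
      have h1 : loc (i + (k n - 1)) = (n, k n - 1) :=
        hB n i hi _ (by have := hkpos n; omega)
      have h2 : i + k n = (i + (k n - 1)) + 1 := by have := hkpos n; omega
      rw [h2, hloc_succ, h1]
      dsimp only
      rw [if_pos (by have := hkpos n; omega)]
  choose s hs using hA
  have hloc_s : ∀ n, loc (s n + (k n - 1)) = (n, k n - 1) :=
    fun n => hB n (s n) (hs n) _ (by have := hkpos n; omega)
  have hbadidx : ∀ n, w (s n + (k n - 1)) = SC.bad := by
    intro n
    show q (loc (s n + (k n - 1))).1 (loc (s n + (k n - 1))).2 = SC.bad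
    rw [hloc_s n]
    exact hbad n
  have hinj : Function.Injective (fun n => s n + (k n - 1)) := by
    intro m n hmn
    have hmn' : s m + (k m - 1) = s n + (k n - 1) := hmn
    have h3 : ((m, k m - 1) : ℕ × ℕ) = (n, k n - 1) := by
      rw [← hloc_s m, ← hloc_s n, hmn']
    exact (Prod.ext_iff.1 h3).1
  have hinf : {i | w i = SC.bad}.Infinite :=
    Set.infinite_of_injective_forall_mem hinj fun n => hbadidx n
  have hfin : {i | w i = SC.bad}.Finite := hsat (f 0) w ⟨ρ, hρ0, hρstep⟩
  exact hinf hfin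

end CoBuchiAux

/-- Lemma 6.7.  `L_α` is well-monotonic, satisfies
co-Büchi, and embeds every graph with fewer than `|α|` vertices satisfying
co-Büchi. -/
theorem stmt13 (α : Ordinal.{0}) :
    Monotonic (cobuchiE α) ∧ NoSinks (cobuchiE α) ∧
    WellFounded ((· < ·) : ↥(Set.Iio α) → ↥(Set.Iio α) → Prop) ∧
    (∀ l : ↥(Set.Iio α), Sat CoBuchi (cobuchiE α) l) ∧
    (∀ (V : Type) (E : V → SC → V → Prop), NoSinks E →
      Cardinal.mk V < α.card → (∀ v : V, Sat CoBuchi E v) →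
      ∃ φ : V → ↥(Set.Iio α), IsMorphism E (cobuchiE α) φ) := by
  refine ⟨⟨?_, ?_⟩, ?_, ?_, ?_, ?_⟩
  · -- LeftComp
    intro a b c d hba hm
    cases c with
    | safe => exact le_trans hm (Subtype.coe_le_coe.2 hba)
    | bad => exact lt_of_lt_of_le hm (Subtype.coe_le_coe.2 hba)
  · -- RightComp
    intro a c b d hm hdb
    cases c with
    | safe => exact le_trans (Subtype.coe_le_coe.2 hdb) hm
    | bad => exact lt_of_le_of_lt (Subtype.coe_le_coe.2 hdb) hm
  · -- NoSinks
    intro a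
    exact ⟨SC.safe, a, le_refl _⟩
  · -- WellFounded
    exact InvImage.wf Subtype.val Ordinal.lt_wf
  · -- Sat
    rintro l w ⟨ρ, h0, hstep⟩
    have hstep_le : ∀ i, (ρ (i + 1)).val ≤ (ρ i).val := by
      intro i
      have h := hstep i
      cases hw : w i
      · rw [hw] at h; exact h
      · rw [hw] at h; exact le_of_lt h
    have hmono : ∀ i j, i ≤ j → (ρ j).val ≤ (ρ i).val := by
      intro i j h
      induction h with
      | refl => exact le_refl _
      | step h ih => exact le_trans (hstep_le _) ih
    obtain ⟨m, ⟨N, hN⟩, hmin⟩ :=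
      Ordinal.lt_wf.has_min (Set.range fun i => (ρ i).val) ⟨(ρ 0).val, 0, rfl⟩
    refine (Set.finite_Iio N).subset ?_
    intro i hi
    by_contra hni
    have hNi : N ≤ i := le_of_not_gt hni
    have hb := hstep i
    rw [hi] at hb
    have h1 : (ρ (i + 1)).val < m := lt_of_lt_of_le hb (hN ▸ hmono N i hNi)
    exact hmin _ ⟨i + 1, rfl⟩ h1
  · -- Universality
    intro V E hns hcard hsat
    haveI : IsWellFounded V (cbBelow E) := ⟨cbWF E hsat⟩
    set rk : V → Ordinal.{0} := IsWellFounded.rank (cbBelow E) with hrk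
    have hbound : ∀ v, rk v < α := by
      intro v
      by_contra hle
      push_neg at hle
      have h1 : Set.Iio (rk v) ⊆ Set.range rk :=
        fun o ho => IsWellFounded.mem_range_rank_of_le ho.le
      have h2 : Cardinal.mk (Set.Iio (rk v)) ≤ Cardinal.mk (Set.range rk) :=
        Cardinal.mk_le_mk_of_subset h1
      rw [Ordinal.mk_Iio_ordinal] at h2
      have h3 : Cardinal.lift.{0} (Cardinal.mk (Set.range rk)) ≤
          Cardinal.lift.{1} (Cardinal.mk V) := Cardinal.mk_range_le_lift
      rw [Cardinal.lift_uzero] at h3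
      have h5 : (rk v).card ≤ Cardinal.mk V := Cardinal.lift_le.1 (h2.trans h3)
      have h6 : α.card ≤ (rk v).card := Ordinal.card_le_card hle
      exact absurd (lt_of_le_of_lt (h6.trans h5) hcard) (lt_irrefl _)
    refine ⟨fun v => ⟨rk v, hbound v⟩, ?_⟩
    intro a c b hab
    cases c with
    | safe =>
      show rk b ≤ rk a
      rw [hrk, IsWellFounded.rank_eq]
      refine Ordinal.iSup_le ?_
      rintro ⟨x, hx⟩
      rw [Order.succ_le_iff]
      obtain ⟨u, hru, hbadu⟩ := hx
      exact IsWellFounded.rank_lt_of_rel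
        ⟨u, Relation.ReflTransGen.head ⟨SC.safe, hab⟩ hru, hbadu⟩
    | bad =>
      exact IsWellFounded.rank_lt_of_rel ⟨a, Relation.ReflTransGen.refl, hab⟩
end

section
/- Let C = ℤ and let Energy : C^ω → ℕ ∪ {∞} be the valuation Energy(t₀t₁⋯) = sup_{k ≥ 0} Σ_{i=0}^{k−1} t_i (the supremum of all partial sums, including the empty sum 0), where ℕ ∪ {∞} carries its usual complete linear order. Let L be the C-graph with vertex set ℕ (usual order) and edges ℓ →t ℓ' if and only if t ≤ ℓ − ℓ' in ℤ. Then L is well-monotonic, and its completion L^⊤ is a completely well-monotonic C-graph which is (κ, Energy)-universal for every cardinal κ (uniformly Energy-universal). -/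
/-!
Common vocabulary: graphs as edge relations `E : V → C → V → Prop` (a `C`-graph
additionally has no sinks), infinite paths and their colorations, valuations,
values of vertices, morphisms, universality, monotonic graphs, games,
strategies, positional strategies and positionality, neutral colors.
-/

universe u v w

/-- The energy valuation: supremum of the partial sums (including the empty
sum `0`), valued in `ℕ ∪ {∞}`. -/
noncomputable def EnergyVal (w : ℕ → ℤ) : ℕ∞ :=
  ⨆ k : ℕ, (((∑ i ∈ Finset.range k, w i).toNat : ℕ) : ℕ∞)

/-- The monotonic `ℤ`-graph for energy: vertices `ℕ`, edges `ℓ →t ℓ'` iff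
`t ≤ ℓ - ℓ'`. -/
def energyE : ℕ → ℤ → ℕ → Prop := fun l t l' => t ≤ (l : ℤ) - (l' : ℤ)

section EnergyHelpers

lemma energy_ge (w : ℕ → ℤ) (k : ℕ) :
    (((∑ i ∈ Finset.range k, w i).toNat : ℕ) : ℕ∞) ≤ EnergyVal w :=
  le_iSup (fun k => (((∑ i ∈ Finset.range k, w i).toNat : ℕ) : ℕ∞)) k

lemma energy_le {w : ℕ → ℤ} {m : ℕ} (h : ∀ k, (∑ i ∈ Finset.range k, w i) ≤ (m : ℤ)) :
    EnergyVal w ≤ (m : ℕ∞) := by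
  refine iSup_le fun k => ?_
  have : (∑ i ∈ Finset.range k, w i).toNat ≤ m := by
    have := h k; omega
  exact_mod_cast this

lemma exists_infPath' {V : Type v} {E : V → ℤ → V → Prop} (hE : NoSinks E) (a : V) :
    ∃ w, InfPath E a w := by
  choose c b h using hE
  exact ⟨fun i => c ((fun n => Nat.rec a (fun _ v => b v) n) i),
    fun n => Nat.rec a (fun _ v => b v) n, rfl, fun i => h _⟩

lemma vval_mem_le {V : Type v} {E : V → ℤ → V → Prop} {a : V} {w : ℕ → ℤ}
    (hw : InfPath E a w) : EnergyVal w ≤ vval EnergyVal E a :=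
  le_sSup ⟨w, hw, rfl⟩

lemma enat_top_of_forall {x : ℕ∞} (h : ∀ n : ℕ, (n : ℕ∞) ≤ x) : x = ⊤ := by
  cases x with
  | top => rfl
  | coe m =>
    have h2 : m + 1 ≤ m := by exact_mod_cast h (m + 1)
    omega

lemma vval_completion (l : WithTop ℕ) :
    vval EnergyVal (completionE energyE) l = l := by
  induction l using WithTop.recTopCoe with
  | top =>
    have hp : InfPath (completionE energyE) (⊤ : WithTop ℕ) (fun _ => (1 : ℤ)) :=
      ⟨fun _ => ⊤, rfl, fun _ => Or.inl rfl⟩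
    have hval : EnergyVal (fun _ => (1 : ℤ)) = ⊤ := by
      refine enat_top_of_forall fun n => ?_
      have := energy_ge (fun _ => (1 : ℤ)) n
      simpa using this
    have := vval_mem_le hp
    rw [hval] at this
    exact top_le_iff.mp this
  | coe m =>
    apply le_antisymm
    · refine sSup_le ?_
      rintro x ⟨w, ⟨ρ, hρ0, hstep⟩, rfl⟩
      have key : ∀ k, ∃ lk : ℕ, ρ k = (lk : WithTop ℕ) ∧
          (∑ i ∈ Finset.range k, w i) + lk ≤ (m : ℤ) := by
        intro k
        induction k with
        | zero => exact ⟨m, hρ0, by simp⟩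
        | succ k ih =>
          obtain ⟨lk, hk, hsum⟩ := ih
          have h := hstep k
          simp only [completionE] at h
          rcases h with h | ⟨p, q, h1, h2, hE⟩
          · rw [hk] at h; exact absurd h (by simp)
          · rw [hk] at h1
            have hp : lk = p := WithTop.coe_inj.mp h1
            have hE' : w k ≤ (p : ℤ) - (q : ℤ) := hE
            refine ⟨q, h2, ?_⟩
            rw [Finset.sum_range_succ]
            omega
      refine energy_le fun k => ?_
      obtain ⟨lk, _, hsum⟩ := key k
      omega
    · set w : ℕ → ℤ := fun i => if i = 0 then (m : ℤ) else 0 with hw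
      set ρ : ℕ → WithTop ℕ := fun i => if i = 0 then (m : WithTop ℕ) else ((0 : ℕ) : WithTop ℕ) with hρ
      have hp : InfPath (completionE energyE) ((m : ℕ) : WithTop ℕ) w := by
        refine ⟨ρ, rfl, fun i => ?_⟩
        cases i with
        | zero =>
          exact Or.inr ⟨m, 0, rfl, rfl, by simp [energyE, hw]⟩
        | succ j =>
          exact Or.inr ⟨0, 0, rfl, rfl, by simp [energyE, hw]⟩
      have hge : ((m : ℕ) : ℕ∞) ≤ EnergyVal w := by
        have := energy_ge w 1
        simpa [hw] using this
      exact le_trans hge (vval_mem_le hp)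

end EnergyHelpers

/-- Lemma 6.8.  The energy graph is well-monotonic and its
completion is a completely well-monotonic graph which is uniformly
`Energy`-universal. -/
theorem stmt14 :
    Monotonic energyE ∧ NoSinks energyE ∧
    WellFounded ((· < ·) : ℕ → ℕ → Prop) ∧
    CWM ℤ (WithTop ℕ) (completionE energyE) ∧
    (∀ κ : Cardinal.{u}, Universal EnergyVal κ (completionE energyE)) := by
  have monoE : Monotonic energyE := by
    constructor
    · intro a b c d hba h
      simp only [energyE] at *
      omega
    · intro a c b d h hdb
      simp only [energyE] at *
      omega
  refine ⟨monoE, fun a => ⟨0, a, by simp [energyE]⟩, wellFounded_lt, ?_, ?_⟩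
  · -- CWM of the completion
    refine ⟨⟨?_, ?_⟩, ?_, wellFounded_lt, fun A => ⟨sSup A, isLUB_sSup A⟩,
      fun c l => ⟨⊤, Or.inl rfl⟩⟩
    · -- LeftComp
      intro a b c d hba h
      rcases h with h | ⟨p, q, h1, h2, hE⟩
      · subst h
        exact Or.inl (top_le_iff.mp hba)
      · induction a using WithTop.recTopCoe with
        | top => exact Or.inl rfl
        | coe a' =>
          refine Or.inr ⟨a', q, rfl, h2, ?_⟩
          rw [h1] at hba
          have hpa : p ≤ a' := by exact_mod_cast hba
          have hE' : c ≤ (p : ℤ) - (q : ℤ) := hE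
          show c ≤ (a' : ℤ) - (q : ℤ)
          omega
    · -- RightComp
      intro a c b d h hdb
      rcases h with h | ⟨p, q, h1, h2, hE⟩
      · exact Or.inl h
      · rw [h2] at hdb
        obtain ⟨d', rfl, hd'⟩ := WithTop.le_coe_iff.mp hdb
        refine Or.inr ⟨p, d', h1, rfl, ?_⟩
        have hE' : c ≤ (p : ℤ) - (q : ℤ) := hE
        show c ≤ (p : ℤ) - (d' : ℤ)
        omega
    · -- NoSinks
      intro x
      induction x using WithTop.recTopCoe with
      | top => exact ⟨0, ⊤, Or.inl rfl⟩
      | coe n => exact ⟨0, (n : WithTop ℕ), Or.inr ⟨n, n, rfl, rfl, by simp [energyE]⟩⟩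
  · -- universality
    intro κ V E hE _
    refine ⟨fun a => vval EnergyVal E a, ?_, fun a => vval_completion _⟩
    intro a t b hab
    rcases eq_or_ne (vval EnergyVal E a) ⊤ with htop | hne
    · exact Or.inl htop
    · obtain ⟨m, hm⟩ : ∃ m : ℕ, vval EnergyVal E a = (m : ℕ∞) :=
        ⟨(vval EnergyVal E a).toNat, (ENat.coe_toNat hne).symm⟩
      have key : ∀ w, InfPath E b w → ∀ k,
          t + ∑ i ∈ Finset.range k, w i ≤ (m : ℤ) := by
        rintro w ⟨ρ, hρ0, hstep⟩ k
        set w' : ℕ → ℤ := fun i => Nat.rec t (fun j _ => w j) i with hw'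
        set ρ' : ℕ → V := fun i => Nat.rec a (fun j _ => ρ j) i with hρ'
        have hpath : InfPath E a w' := by
          refine ⟨ρ', rfl, fun i => ?_⟩
          cases i with
          | zero =>
            show E a t (ρ 0)
            rw [hρ0]; exact hab
          | succ j => exact hstep j
        have hle : EnergyVal w' ≤ ((m : ℕ) : ℕ∞) := hm ▸ vval_mem_le hpath
        have h1 : (((∑ i ∈ Finset.range (k+1), w' i).toNat : ℕ) : ℕ∞) ≤ ((m : ℕ) : ℕ∞) :=
          le_trans (energy_ge w' (k+1)) hle
        have h2 : (∑ i ∈ Finset.range (k+1), w' i).toNat ≤ m := by exact_mod_cast h1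
        have h3 : ∑ i ∈ Finset.range (k+1), w' i =
            t + ∑ i ∈ Finset.range k, w i := by
          rw [Finset.sum_range_succ']
          have : ∑ i ∈ Finset.range k, w' (i + 1) = ∑ i ∈ Finset.range k, w i :=
            Finset.sum_congr rfl fun i _ => rfl
          rw [this]
          have h0 : w' 0 = t := rfl
          rw [h0]; ring
        omega
      obtain ⟨w0, hw0⟩ := exists_infPath' hE b
      have htm : t ≤ (m : ℤ) := by
        have := key w0 hw0 0
        simpa using this
      have hvb : vval EnergyVal E b ≤ (((m : ℤ) - t).toNat : ℕ∞) := by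
        refine sSup_le ?_
        rintro x ⟨w, hw, rfl⟩
        refine energy_le fun k => ?_
        have := key w hw k
        omega
      have hneb : vval EnergyVal E b ≠ ⊤ :=
        ne_top_of_le_ne_top (WithTop.coe_ne_top) hvb
      obtain ⟨n, hn⟩ : ∃ n : ℕ, vval EnergyVal E b = (n : ℕ∞) :=
        ⟨(vval EnergyVal E b).toNat, (ENat.coe_toNat hneb).symm⟩
      have hnle : n ≤ ((m : ℤ) - t).toNat := by
        rw [hn] at hvb
        exact_mod_cast hvb
      refine Or.inr ⟨m, n, hm, hn, ?_⟩
      show t ≤ (m : ℤ) - (n : ℤ)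
      omega
end
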